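/- For u² = 6/11 and t = 3, the rational number 1/4 is not a finite cusp of Δ(6/11, 6); in particular C(Δ(6/11, 6)) ≠ ℚ. Combined with the density of C(Δ(6/11,6)) in ∏_p ℚ_p, this shows that density of the finite cusp set in the product ∏_p ℚ_p of all p-adic fields is not a sufficient condition for pseudomodularity. -/

import Mathlib

open Matrix

/-- The projective general linear group `PGL₂(ℚ)`. -/
abbrev PGL2Q : Type := GL (Fin 2) ℚ ⧸ Subgroup.center (GL (Fin 2) ℚ)

/-- The canonical projection `GL₂(ℚ) → PGL₂(ℚ)`. -/
def pgl : GL (Fin 2) ℚ →* PGL2Q := QuotientGroup.mk' (Subgroup.center (GL (Fin 2) ℚ))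

/-- The Möbius action of a matrix `A ∈ GL₂(ℚ)` on `ℙ¹(ℚ) = ℚ ∪ {∞}`. -/
def moebius (A : GL (Fin 2) ℚ) (z : OnePoint ℚ) : OnePoint ℚ :=
  Option.elim z
    (if A.val 1 0 = 0 then OnePoint.infty else ((A.val 0 0 / A.val 1 0 : ℚ) : OnePoint ℚ))
    (fun x => if A.val 1 0 * x + A.val 1 1 = 0 then OnePoint.infty
      else (((A.val 0 0 * x + A.val 0 1) / (A.val 1 0 * x + A.val 1 1) : ℚ) : OnePoint ℚ))

/-- `Δ(u²,2t)`: the subgroup of `PGL₂(ℚ)` generated by the images of the matrices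
`M₁ = [[t−1, u²],[1, 1]]` and `M₂ = [[u², u²],[1, t−u²]]`. -/
def Delta (u2 t : ℚ) : Subgroup PGL2Q :=
  Subgroup.closure (pgl ''
    {A : GL (Fin 2) ℚ | A.val = !![t - 1, u2; 1, 1] ∨ A.val = !![u2, u2; 1, t - u2]})

/-- The set `C(Γ)` of finite cusps of a subgroup `Γ ≤ PGL₂(ℚ)`: rationals fixed by a
parabolic element of `Γ` (an element `γ ≠ 1` with `tr(A)² = 4·det(A)` for a representative
`A ∈ GL₂(ℚ)`). -/
def finiteCusps (Γ : Subgroup PGL2Q) : Set ℚ :=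
  {x : ℚ | ∃ A : GL (Fin 2) ℚ, pgl A ∈ Γ ∧ pgl A ≠ 1 ∧
    (A.val.trace) ^ 2 = 4 * A.val.det ∧ moebius A (x : OnePoint ℚ) = (x : OnePoint ℚ)}

/-
We show that `1/4` is not a finite cusp of `Δ(6/11, 6)`.

Strategy (ping-pong + special point):
* `Δ(6/11,6)` is generated by `U₁, U₂` which play ping-pong on the hyperbolic plane
  (acting on `ℂ` via Möbius transformations) with four pairwise disjoint regions
  `Y₁⁺ = {Re ≥ 6/11}`, `Y₁⁻ = {|z+1/2| ≤ 1/2}`, `Y₂⁺ = {|z−3/11| ≤ 3/11}`, `Y₂⁻ = {Re ≤ −1}`;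
  hence every nontrivial element of the group moves the point `i` into one of these regions.
* The explicit word `H = U₁⁻¹U₂U₁U₂⁻³` is hyperbolic with fixed point `1/4` and
  rational eigenvalue ratio `1/1024`; conjugation by `Hⁿ` contracts any parabolic fixing `1/4`
  to an element arbitrarily close to the identity, which therefore moves `i` only slightly —
  contradiction.
-/

noncomputable section
namespace NotCuspProof

abbrev Mat2 := Matrix (Fin 2) (Fin 2) ℚ

/-- Möbius action of a rational 2×2 matrix on `ℂ`. -/
def act (M : Mat2) (z : ℂ) : ℂ :=
  ((M 0 0 : ℂ) * z + (M 0 1 : ℂ)) / ((M 1 0 : ℂ) * z + (M 1 1 : ℂ))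

lemma den_ne (c d : ℚ) (z : ℂ) (hz : z.im ≠ 0) (h : ¬(c = 0 ∧ d = 0)) :
    (c : ℂ) * z + (d : ℂ) ≠ 0 := by
  by_cases hc : c = 0
  · subst hc
    push_neg at h
    simpa using h rfl
  · intro he
    have him : ((c : ℂ) * z + (d : ℂ)).im = 0 := by rw [he]; simp
    simp [Complex.add_im, Complex.mul_im] at him
    rcases him with h1 | h1
    · exact hc (by exact_mod_cast h1)
    · exact hz h1

lemma act_spec (a b c d : ℚ) (z : ℂ) (hz : z.im ≠ 0) (h : ¬(c = 0 ∧ d = 0)) :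
    0 < ((c : ℝ) * z.re + d) ^ 2 + ((c : ℝ) * z.im) ^ 2 ∧
    (act !![a, b; c, d] z).re * (((c : ℝ) * z.re + d) ^ 2 + ((c : ℝ) * z.im) ^ 2)
      = ((a : ℝ) * z.re + b) * ((c : ℝ) * z.re + d) + (a : ℝ) * c * z.im ^ 2 ∧
    (act !![a, b; c, d] z).im * (((c : ℝ) * z.re + d) ^ 2 + ((c : ℝ) * z.im) ^ 2)
      = ((a : ℝ) * (d : ℝ) - (b : ℝ) * c) * z.im := by
  have hden : (c : ℂ) * z + (d : ℂ) ≠ 0 := den_ne c d z hz h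
  have hQ : Complex.normSq ((c : ℂ) * z + (d : ℂ)) =
      ((c : ℝ) * z.re + d) ^ 2 + ((c : ℝ) * z.im) ^ 2 := by
    simp [Complex.normSq_apply, Complex.add_re, Complex.add_im, Complex.mul_re, Complex.mul_im]
    ring
  have hQpos : 0 < ((c : ℝ) * z.re + d) ^ 2 + ((c : ℝ) * z.im) ^ 2 := by
    rw [← hQ]; exact Complex.normSq_pos.2 hden
  have hQne : (((c : ℝ) * z.re + d) ^ 2 + ((c : ℝ) * z.im) ^ 2) ≠ 0 := ne_of_gt hQpos
  have hact : act !![a, b; c, d] z = ((a:ℂ)*z+b) / ((c:ℂ)*z+d) := by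
    simp [act]
  have hNre : ((a:ℂ)*z+b).re = (a:ℝ)*z.re + b := by
    simp [Complex.add_re, Complex.mul_re]
  have hNim : ((a:ℂ)*z+b).im = (a:ℝ)*z.im := by
    simp [Complex.add_im, Complex.mul_im]
  have hDre : ((c:ℂ)*z+d).re = (c:ℝ)*z.re + d := by
    simp [Complex.add_re, Complex.mul_re]
  have hDim : ((c:ℂ)*z+d).im = (c:ℝ)*z.im := by
    simp [Complex.add_im, Complex.mul_im]
  refine ⟨hQpos, ?_, ?_⟩
  · rw [hact, Complex.div_re, hNre, hNim, hDre, hDim, hQ]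
    rw [← add_div, div_mul_cancel₀ _ hQne]
    ring
  · rw [hact, Complex.div_im, hNre, hNim, hDre, hDim, hQ]
    rw [← sub_div, div_mul_cancel₀ _ hQne]
    ring

lemma den_ne' (M : Mat2) (hM : M.det ≠ 0) (z : ℂ) (hz : z.im ≠ 0) :
    (M 1 0 : ℂ) * z + (M 1 1 : ℂ) ≠ 0 := by
  by_cases hc : M 1 0 = 0
  · have hd : M 1 1 ≠ 0 := by
      intro hd; apply hM; rw [Matrix.det_fin_two, hc, hd]; ring
    rw [hc]
    simpa using hd
  · intro he
    have him : ((M 1 0 : ℂ) * z + (M 1 1 : ℂ)).im = 0 := by rw [he]; simp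
    simp [Complex.add_im, Complex.mul_im] at him
    rcases him with h1 | h1
    · exact hc (by exact_mod_cast h1)
    · exact hz h1

lemma act_im_ne (M : Mat2) (hM : M.det ≠ 0) (z : ℂ) (hz : z.im ≠ 0) :
    (act M z).im ≠ 0 := by
  have hden := den_ne' M hM z hz
  have hfor : (act M z).im
      = (M.det : ℝ) * z.im / Complex.normSq ((M 1 0 : ℂ) * z + (M 1 1 : ℂ)) := by
    rw [act, Complex.div_im, Matrix.det_fin_two, Complex.normSq_apply]
    simp only [Complex.add_re, Complex.add_im, Complex.mul_re, Complex.mul_im,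
      Complex.ratCast_re, Complex.ratCast_im]
    push_cast
    ring
  rw [hfor]
  have h1 : Complex.normSq ((M 1 0 : ℂ) * z + (M 1 1 : ℂ)) ≠ 0 := by
    simpa using Complex.normSq_pos.2 hden |>.ne'
  have h2 : (M.det : ℝ) ≠ 0 := Rat.cast_ne_zero.2 hM
  exact div_ne_zero (mul_ne_zero h2 hz) h1

lemma act_mul (M N : Mat2) (hM : M.det ≠ 0) (hN : N.det ≠ 0) (z : ℂ) (hz : z.im ≠ 0) :
    act (M * N) z = act M (act N z) := by
  have hdN := den_ne' N hN z hz
  have hdMN : ((M*N) 1 0 : ℂ) * z + ((M*N) 1 1 : ℂ) ≠ 0 := by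
    apply den_ne' _ _ z hz
    rw [Matrix.det_mul]
    exact mul_ne_zero hM hN
  set w := act N z with hw
  have h1 : (M 0 0 : ℂ) * w + (M 0 1 : ℂ) =
      (((M*N) 0 0 : ℂ) * z + ((M*N) 0 1 : ℂ)) / ((N 1 0 : ℂ) * z + (N 1 1 : ℂ)) := by
    rw [hw, act, eq_div_iff hdN, add_mul, mul_assoc (M 0 0 : ℂ), div_mul_cancel₀ _ hdN]
    simp only [Matrix.mul_apply, Fin.sum_univ_two]
    push_cast
    ring
  have h2 : (M 1 0 : ℂ) * w + (M 1 1 : ℂ) =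
      (((M*N) 1 0 : ℂ) * z + ((M*N) 1 1 : ℂ)) / ((N 1 0 : ℂ) * z + (N 1 1 : ℂ)) := by
    rw [hw, act, eq_div_iff hdN, add_mul, mul_assoc (M 1 0 : ℂ), div_mul_cancel₀ _ hdN]
    simp only [Matrix.mul_apply, Fin.sum_univ_two]
    push_cast
    ring
  rw [show act M w = ((M 0 0 : ℂ) * w + (M 0 1 : ℂ)) / ((M 1 0 : ℂ) * w + (M 1 1 : ℂ)) from rfl,
    h1, h2, div_div_div_comm, div_self hdN, div_one]
  rfl

lemma act_smul (r : ℚ) (hr : r ≠ 0) (M : Mat2) (z : ℂ) :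
    act (r • M) z = act M z := by
  rw [act, act]
  simp only [Matrix.smul_apply, smul_eq_mul]
  push_cast
  by_cases hd : (M 1 0 : ℂ) * z + (M 1 1 : ℂ) = 0
  · rw [show (r:ℂ) * (M 1 0) * z + (r:ℂ) * (M 1 1) = (r:ℂ) * ((M 1 0 : ℂ) * z + (M 1 1 : ℂ))
        from by ring, hd]
    simp
  · rw [show (r:ℂ) * (M 1 0) * z + (r:ℂ) * (M 1 1) = (r:ℂ) * ((M 1 0 : ℂ) * z + (M 1 1 : ℂ))
        from by ring,
      show (r:ℂ) * (M 0 0) * z + (r:ℂ) * (M 0 1) = (r:ℂ) * ((M 0 0 : ℂ) * z + (M 0 1 : ℂ))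
        from by ring]
    rw [mul_div_mul_left _ _ (by exact_mod_cast hr)]

/-! ### The generators -/

def V1 : Mat2 := !![2, 6/11; 1, 1]
def W1 : Mat2 := !![11/16, -3/8; -11/16, 11/8]
def V2 : Mat2 := !![6/11, 6/11; 1, 27/11]
def W2 : Mat2 := !![99/32, -11/16; -121/96, 11/16]

def U1 : GL (Fin 2) ℚ :=
  ⟨V1, W1, by
    ext i j; fin_cases i <;> fin_cases j <;>
      simp [V1, W1, Matrix.mul_apply, Fin.sum_univ_two, Matrix.one_apply] <;> norm_num,
   by
    ext i j; fin_cases i <;> fin_cases j <;>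
      simp [V1, W1, Matrix.mul_apply, Fin.sum_univ_two, Matrix.one_apply] <;> norm_num⟩

def U2 : GL (Fin 2) ℚ :=
  ⟨V2, W2, by
    ext i j; fin_cases i <;> fin_cases j <;>
      simp [V2, W2, Matrix.mul_apply, Fin.sum_univ_two, Matrix.one_apply] <;> norm_num,
   by
    ext i j; fin_cases i <;> fin_cases j <;>
      simp [V2, W2, Matrix.mul_apply, Fin.sum_univ_two, Matrix.one_apply] <;> norm_num⟩

/-! ### Ping-pong regions -/

def gen (p : Bool × Bool) : GL (Fin 2) ℚ := cond p.2 (cond p.1 U1 U2) (cond p.1 U1 U2)⁻¹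

def Yl : Bool × Bool → ℂ → Prop
  | (true, true) => fun z => 6/11 ≤ z.re
  | (true, false) => fun z => Complex.normSq z + z.re ≤ 0
  | (false, true) => fun z => Complex.normSq z ≤ 6/11 * z.re
  | (false, false) => fun z => z.re ≤ -1

lemma Yl_I (p : Bool × Bool) : ¬ Yl p Complex.I := by
  obtain ⟨b, s⟩ := p
  cases b <;> cases s <;> simp [Yl, Complex.normSq_apply]

lemma Yl_disjoint (p q : Bool × Bool) (hpq : p ≠ q) (z : ℂ) (hz : 0 < z.im)
    (h : Yl p z) : ¬ Yl q z := by
  obtain ⟨b, s⟩ := p; obtain ⟨b', s'⟩ := q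
  have hns : Complex.normSq z = z.re ^ 2 + z.im ^ 2 := by
    rw [Complex.normSq_apply]; ring
  cases b <;> cases s <;> cases b' <;> cases s' <;>
    first
      | exact (hpq rfl).elim
      | (intro hq
         simp only [Yl, hns] at h hq
         nlinarith [sq_nonneg z.re, sq_nonneg z.im, sq_nonneg (z.re + 1), hz, mul_pos hz hz])

section helpers
variable {w : ℂ} {P Q Dy : ℝ}

lemma Tpos_of (hQ : 0 < Q) (him : w.im * Q = Dy) (hDy : 0 < Dy) : 0 < w.im := by
  nlinarith

lemma T1_of (hQ : 0 < Q) (hre : w.re * Q = P) (key : 6/11 * Q ≤ P) : 6/11 ≤ w.re := by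
  nlinarith

lemma T4_of (hQ : 0 < Q) (hre : w.re * Q = P) (key : P ≤ -Q) : w.re ≤ -1 := by
  nlinarith

lemma T2_of (hQ : 0 < Q) (hre : w.re * Q = P) (him : w.im * Q = Dy)
    (key : P ^ 2 + Dy ^ 2 + P * Q ≤ 0) : Complex.normSq w + w.re ≤ 0 := by
  have e1 : w.re = P / Q := by rw [eq_div_iff (ne_of_gt hQ)]; exact hre
  have e2 : w.im = Dy / Q := by rw [eq_div_iff (ne_of_gt hQ)]; exact him
  rw [Complex.normSq_apply, e1, e2]
  have h3 : P / Q * (P / Q) + Dy / Q * (Dy / Q) + P / Q = (P ^ 2 + Dy ^ 2 + P * Q) / Q ^ 2 := by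
    field_simp
  rw [h3]
  exact div_nonpos_of_nonpos_of_nonneg key (by positivity)

lemma T3_of (hQ : 0 < Q) (hre : w.re * Q = P) (him : w.im * Q = Dy)
    (key : P ^ 2 + Dy ^ 2 - 6/11 * (P * Q) ≤ 0) : Complex.normSq w ≤ 6/11 * w.re := by
  have e1 : w.re = P / Q := by rw [eq_div_iff (ne_of_gt hQ)]; exact hre
  have e2 : w.im = Dy / Q := by rw [eq_div_iff (ne_of_gt hQ)]; exact him
  rw [← sub_nonpos, Complex.normSq_apply, e1, e2]
  have h3 : P / Q * (P / Q) + Dy / Q * (Dy / Q) - 6/11 * (P / Q)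
      = (P ^ 2 + Dy ^ 2 - 6/11 * (P * Q)) / Q ^ 2 := by
    field_simp
  rw [h3]
  exact div_nonpos_of_nonpos_of_nonneg key (by positivity)

end helpers

lemma letter (p : Bool × Bool) (z : ℂ) (hz : 0 < z.im) (hY : ¬ Yl (p.1, !p.2) z) :
    0 < (act (gen p).val z).im ∧ Yl p (act (gen p).val z) := by
  have hns : Complex.normSq z = z.re ^ 2 + z.im ^ 2 := by
    rw [Complex.normSq_apply]; ring
  obtain ⟨b, s⟩ := p
  cases b <;> cases s
  · rw [show (gen (false, false)).val = (U2⁻¹).val from rfl, show (U2⁻¹).val = W2 from rfl]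
    simp only [Bool.not_false, Bool.not_true, Yl, hns, not_le] at hY ⊢
    simp only [W2]
    obtain ⟨hQ, hre, him⟩ := act_spec (99/32) (-11/16) (-121/96) (11/16) z hz.ne' (by norm_num)
    push_cast at hQ hre him
    refine ⟨Tpos_of hQ him (by nlinarith), T4_of hQ hre ?_⟩
    nlinarith [mul_pos hQ (show (0:ℝ) < z.re ^ 2 + z.im ^ 2 - 6/11 * z.re by linarith)]
  · rw [show (gen (false, true)).val = U2.val from rfl, show U2.val = V2 from rfl]
    simp only [Bool.not_false, Bool.not_true, Yl, hns, not_le] at hY ⊢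
    simp only [V2]
    obtain ⟨hQ, hre, him⟩ := act_spec (6/11) (6/11) 1 (27/11) z hz.ne' (by norm_num)
    push_cast at hQ hre him
    refine ⟨Tpos_of hQ him (by nlinarith), ?_⟩
    refine T3_of hQ hre him ?_
    nlinarith [mul_pos (mul_pos hQ hQ) (show (0:ℝ) < z.re + 1 by linarith)]
  · rw [show (gen (true, false)).val = (U1⁻¹).val from rfl, show (U1⁻¹).val = W1 from rfl]
    simp only [Bool.not_false, Bool.not_true, Yl, hns, not_le] at hY ⊢
    simp only [W1]
    obtain ⟨hQ, hre, him⟩ := act_spec (11/16) (-3/8) (-11/16) (11/8) z hz.ne' (by norm_num)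
    push_cast at hQ hre him
    refine ⟨Tpos_of hQ him (by nlinarith), ?_⟩
    refine T2_of hQ hre him ?_
    nlinarith [mul_pos hQ (show (0:ℝ) < 6/11 - z.re by linarith)]
  · rw [show (gen (true, true)).val = U1.val from rfl, show U1.val = V1 from rfl]
    simp only [Bool.not_false, Bool.not_true, Yl, hns, not_le] at hY ⊢
    simp only [V1]
    obtain ⟨hQ, hre, him⟩ := act_spec 2 (6/11) 1 1 z hz.ne' (by norm_num)
    push_cast at hQ hre him
    refine ⟨Tpos_of hQ him (by nlinarith), T1_of hQ hre ?_⟩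
    nlinarith

/-! ### Ping-pong -/

lemma GL_det_ne (A : GL (Fin 2) ℚ) : A.val.det ≠ 0 := by
  have : IsUnit A.val := ⟨A, rfl⟩
  exact ((Matrix.isUnit_iff_isUnit_det _).mp this).ne_zero

def ψ : FreeGroup Bool →* GL (Fin 2) ℚ := FreeGroup.lift (fun b => cond b U1 U2)

lemma psi_mk (L : List (Bool × Bool)) :
    ψ (FreeGroup.mk L)
      = (List.map (fun x => cond x.2 (cond x.1 U1 U2) (cond x.1 U1 U2)⁻¹) L).prod :=
  FreeGroup.lift_mk

lemma psi_cons (p : Bool × Bool) (t : List (Bool × Bool)) :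
    ψ (FreeGroup.mk (p :: t)) = gen p * ψ (FreeGroup.mk t) := by
  rw [psi_mk, psi_mk, List.map_cons, List.prod_cons]
  rfl

lemma pingpong_list :
    ∀ L : List (Bool × Bool), FreeGroup.reduce L = L → ∀ p t, L = p :: t →
    0 < (act (ψ (FreeGroup.mk L)).val Complex.I).im ∧
      Yl p (act (ψ (FreeGroup.mk L)).val Complex.I) := by
  intro L
  induction L with
  | nil => intro _ p t h; simp at h
  | cons p' t' ih =>
    intro hred p t heq
    obtain ⟨rfl, rfl⟩ : p = p' ∧ t = t' := by
      rw [List.cons.injEq] at heq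
      exact ⟨heq.1.symm, heq.2.symm⟩
    have hact : act (ψ (FreeGroup.mk (p :: t))).val Complex.I
        = act (gen p).val (act (ψ (FreeGroup.mk t)).val Complex.I) := by
      rw [psi_cons, Units.val_mul]
      exact act_mul _ _ (GL_det_ne _) (GL_det_ne _) _ (by simp)
    rcases ht : t with _ | ⟨q, t2⟩
    · rw [ht] at hact
      have h1 : ψ (FreeGroup.mk ([] : List (Bool × Bool))) = 1 := by
        rw [psi_mk]; simp
      have hone : act (1 : GL (Fin 2) ℚ).val Complex.I = Complex.I := by
        show act (1 : Mat2) Complex.I = Complex.I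
        rw [act]
        simp [Matrix.one_apply]
      rw [hact, h1, hone]
      exact letter p Complex.I (by simp) (Yl_I _)
    · subst ht
      rw [FreeGroup.reduce.cons] at hred
      rcases hr : FreeGroup.reduce (q :: t2) with _ | ⟨q', t2'⟩
      · rw [hr] at hred
        dsimp only at hred
        simp at hred
      · rw [hr] at hred
        dsimp only at hred
        by_cases hcond : p.1 = q'.1 ∧ p.2 = !q'.2
        · rw [if_pos hcond] at hred
          exfalso
          have hlen := FreeGroup.Red.length_le (L₁ := q :: t2) (FreeGroup.reduce.red)
          rw [hr] at hlen
          have := congrArg List.length hred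
          simp at this hlen
          omega
        · rw [if_neg hcond] at hred
          simp only [List.cons.injEq] at hred
          obtain ⟨-, hq, ht2⟩ := hred
          have hredt : FreeGroup.reduce (q :: t2) = q :: t2 := by rw [hr, hq, ht2]
          obtain ⟨him, hY⟩ := ih hredt q t2 rfl
          have hqne : q ≠ (p.1, !p.2) := by
            intro hqe
            apply hcond
            rw [hq, hqe]
            simp
          have hnY : ¬ Yl (p.1, !p.2) (act (ψ (FreeGroup.mk (q :: t2))).val Complex.I) :=
            Yl_disjoint q (p.1, !p.2) hqne _ him hY
          obtain ⟨h1, h2⟩ := letter p _ him hnY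
          rw [hact]
          exact ⟨h1, h2⟩

lemma pingpong (w : FreeGroup Bool) (hw : w ≠ 1) :
    ∃ p, Yl p (act (ψ w).val Complex.I) := by
  rcases ht : w.toWord with _ | ⟨p, t⟩
  · exact absurd (FreeGroup.toWord_eq_nil_iff.mp ht) hw
  · have h2 : FreeGroup.reduce w.toWord = w.toWord := FreeGroup.reduce_toWord w
    rw [ht] at h2
    have := pingpong_list (p :: t) h2 p t rfl
    rw [← ht, FreeGroup.mk_toWord] at this
    exact ⟨p, this.2⟩

/-! ### The center of `GL₂(ℚ)` -/

lemma central_val {X : GL (Fin 2) ℚ} (h : X ∈ Subgroup.center (GL (Fin 2) ℚ)) :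
    X.val = X.val 0 0 • (1 : Mat2) := by
  have hE1 : (!![1, 1; 0, 1] : Mat2) * !![1, -1; 0, 1] = 1 := by
    ext i j; fin_cases i <;> fin_cases j <;>
      simp [Matrix.mul_apply, Fin.sum_univ_two, Matrix.one_apply]
  have hE1' : (!![1, -1; 0, 1] : Mat2) * !![1, 1; 0, 1] = 1 := by
    ext i j; fin_cases i <;> fin_cases j <;>
      simp [Matrix.mul_apply, Fin.sum_univ_two, Matrix.one_apply]
  have hE2 : (!![1, 0; 1, 1] : Mat2) * !![1, 0; -1, 1] = 1 := by
    ext i j; fin_cases i <;> fin_cases j <;>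
      simp [Matrix.mul_apply, Fin.sum_univ_two, Matrix.one_apply]
  have hE2' : (!![1, 0; -1, 1] : Mat2) * !![1, 0; 1, 1] = 1 := by
    ext i j; fin_cases i <;> fin_cases j <;>
      simp [Matrix.mul_apply, Fin.sum_univ_two, Matrix.one_apply]
  have h1 := Subgroup.mem_center_iff.mp h ⟨!![1, 1; 0, 1], !![1, -1; 0, 1], hE1, hE1'⟩
  have h2 := Subgroup.mem_center_iff.mp h ⟨!![1, 0; 1, 1], !![1, 0; -1, 1], hE2, hE2'⟩
  have h1v : (!![1, 1; 0, 1] : Mat2) * X.val = X.val * !![1, 1; 0, 1] := by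
    have := congrArg Units.val h1
    rwa [Units.val_mul, Units.val_mul] at this
  have h2v : (!![1, 0; 1, 1] : Mat2) * X.val = X.val * !![1, 0; 1, 1] := by
    have := congrArg Units.val h2
    rwa [Units.val_mul, Units.val_mul] at this
  have e10 : X.val 1 0 = 0 := by
    have := congrFun (congrFun h1v 1) 1
    simp [Matrix.mul_apply, Fin.sum_univ_two] at this
    linarith
  have e01 : X.val 0 1 = 0 := by
    have := congrFun (congrFun h2v 0) 0
    simp [Matrix.mul_apply, Fin.sum_univ_two] at this
    linarith
  have e00 : X.val 1 1 = X.val 0 0 := by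
    have := congrFun (congrFun h1v 0) 1
    simp [Matrix.mul_apply, Fin.sum_univ_two] at this
    linarith
  ext i j
  fin_cases i <;> fin_cases j <;>
    simp [Matrix.smul_apply, Matrix.one_apply, e10, e01, e00]

/-! ### The contraction estimate -/

def Kmat : Mat2 := !![1/2, -1/8; 2, -1/2]

lemma far_core {X Y Q qr : ℝ} (hq1 : -(1/100) < qr) (hq2 : qr < 1/100)
    (hQdef : Q = 1 - qr + 17/4 * qr^2)
    (hre : X * Q = 15/8 * qr + 17/16 * qr^2) (him : Y * Q = 1) :
    -(1/25) < X ∧ X < 1/25 ∧ 9/10 < Y := by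
  have hqsq : qr^2 ≤ 1/10000 := by nlinarith
  have hQlb : (49/50 : ℝ) ≤ Q := by nlinarith
  have hQub : Q ≤ (51/50 : ℝ) := by nlinarith
  have hreub : X * Q ≤ 2/100 := by nlinarith
  have hrelb : -(2/100) ≤ X * Q := by nlinarith
  refine ⟨by nlinarith, by nlinarith, by nlinarith⟩

lemma far (s q : ℚ) (hs : s ≠ 0) (hq : |q| < 1/100) (p : Bool × Bool) :
    ¬ Yl p (act (s • (1 : Mat2) + (q * s) • Kmat) Complex.I) := by
  have hmat : s • (!![1 + q/2, -(q/8); 2*q, 1 - q/2] : Mat2)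
      = s • (1 : Mat2) + (q * s) • Kmat := by
    ext i j
    fin_cases i <;> fin_cases j <;>
      · simp [Kmat, Matrix.smul_apply, Matrix.one_apply]
        ring
  rw [← hmat, act_smul s hs]
  have hcd : ¬(2*q = 0 ∧ 1 - q/2 = 0) := by
    rintro ⟨h1, h2⟩
    have : q = 0 := by linarith
    rw [this] at h2
    norm_num at h2
  obtain ⟨hQ, hre, him⟩ := act_spec (1 + q/2) (-(q/8)) (2*q) (1 - q/2) Complex.I (by simp) hcd
  rw [Complex.I_re, Complex.I_im] at hQ hre him
  obtain ⟨hq1, hq2⟩ := abs_lt.mp hq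
  have hq1' : -(1/100 : ℝ) < (q : ℝ) := by
    have := (Rat.cast_lt (K := ℝ)).2 hq1
    push_cast at this
    linarith
  have hq2' : (q : ℝ) < 1/100 := by
    have := (Rat.cast_lt (K := ℝ)).2 hq2
    push_cast at this
    linarith
  set w := act !![1 + q/2, -(q/8); 2*q, 1 - q/2] Complex.I with hw
  have hQval : ((2*(q:ℚ) : ℚ) * (0:ℝ) + ((1 - (q:ℚ)/2 : ℚ) : ℝ)) ^ 2 + (((2*q : ℚ) : ℝ) * 1) ^ 2
      = 1 - (q:ℝ) + 17/4 * (q:ℝ)^2 := by push_cast; ring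
  rw [hQval] at hre him
  have hre' : w.re * (1 - (q:ℝ) + 17/4 * (q:ℝ)^2) = 15/8 * (q:ℝ) + 17/16 * (q:ℝ)^2 := by
    rw [hre]; push_cast; ring
  have him1 : w.im * (1 - (q:ℝ) + 17/4 * (q:ℝ)^2) = 1 := by
    rw [him]; push_cast; ring
  obtain ⟨hwre2, hwre1, hwim⟩ := far_core hq1' hq2' rfl hre' him1
  obtain ⟨b, s'⟩ := p
  cases b <;> cases s' <;>
    simp only [Yl, Complex.normSq_apply, not_le] <;>
    nlinarith [sq_nonneg w.re, sq_nonneg (w.im - 9/10)]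

/-! ### The hyperbolic element fixing `1/4` -/

def Hu : GL (Fin 2) ℚ := U1⁻¹ * U2 * U1 * U2⁻¹ * U2⁻¹ * U2⁻¹

lemma Hu_val : Hu.val = !![-32065/3072, 1331/512; 30613/256, -11495/384] := by
  show W1 * V2 * V1 * W2 * W2 * W2 = _
  rw [W1, V2, V1, W2]
  norm_num [Matrix.mul_fin_two]

lemma Hu_val_mul_K : Hu.val * Kmat = (1/1024 : ℚ) • (Kmat * Hu.val) := by
  rw [Hu_val, Kmat]
  ext i j
  fin_cases i <;> fin_cases j <;>
    · simp [Matrix.mul_apply, Fin.sum_univ_two, Matrix.smul_apply]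
      norm_num

lemma Hu_pow_mul_K (n : ℕ) :
    Hu.val ^ n * Kmat = ((1/1024 : ℚ) ^ n) • (Kmat * Hu.val ^ n) := by
  induction n with
  | zero => simp
  | succ k ihk =>
    calc Hu.val ^ (k+1) * Kmat = Hu.val ^ k * (Hu.val * Kmat) := by
          rw [pow_succ, mul_assoc]
    _ = Hu.val ^ k * ((1/1024 : ℚ) • (Kmat * Hu.val)) := by rw [Hu_val_mul_K]
    _ = (1/1024 : ℚ) • (Hu.val ^ k * Kmat * Hu.val) := by
          rw [Matrix.mul_smul, mul_assoc]
    _ = (1/1024 : ℚ) • (((1/1024 : ℚ) ^ k • (Kmat * Hu.val ^ k)) * Hu.val) := by rw [ihk]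
    _ = ((1/1024 : ℚ) ^ (k+1)) • (Kmat * Hu.val ^ (k+1)) := by
          rw [Matrix.smul_mul, smul_smul, mul_assoc, ← pow_succ, ← pow_succ']

end NotCuspProof

open NotCuspProof in
/-- **Corollary 7.** For `u² = 6/11` and `t = 3`, the rational `1/4` is not a
finite cusp of `Δ(6/11, 6)`; in particular `C(Δ(6/11, 6)) ≠ ℚ`. (Together with the density of
the cusp set in `∏_p ℚ_p`, this shows that density in `∏_p ℚ_p` does not suffice for
pseudomodularity.) -/
theorem one_quarter_not_cusp_six_elevenths :
    (1 / 4 : ℚ) ∉ finiteCusps (Delta (6 / 11) 3) ∧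
      finiteCusps (Delta (6 / 11) 3) ≠ Set.univ := by
  have main : (1 / 4 : ℚ) ∉ finiteCusps (Delta (6 / 11) 3) := by
    rintro ⟨A, hmem, hne1, hpar, hfix⟩
    -- name the entries
    obtain ⟨a, ha⟩ : ∃ x, A.val 0 0 = x := ⟨_, rfl⟩
    obtain ⟨b, hb⟩ : ∃ x, A.val 0 1 = x := ⟨_, rfl⟩
    obtain ⟨c, hc⟩ : ∃ x, A.val 1 0 = x := ⟨_, rfl⟩
    obtain ⟨d, hd⟩ : ∃ x, A.val 1 1 = x := ⟨_, rfl⟩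
    -- decode the fixed-point equation
    have hfix' : moebius A ((1/4 : ℚ) : OnePoint ℚ)
        = (if A.val 1 0 * (1/4) + A.val 1 1 = 0 then OnePoint.infty
            else (((A.val 0 0 * (1/4) + A.val 0 1) / (A.val 1 0 * (1/4) + A.val 1 1) : ℚ)
              : OnePoint ℚ)) := rfl
    rw [hfix', ha, hb, hc, hd] at hfix
    by_cases hden : c * (1/4) + d = 0
    · rw [if_pos hden] at hfix
      exact OnePoint.infty_ne_coe _ hfix
    rw [if_neg hden] at hfix
    have hfr : (a * (1/4) + b) / (c * (1/4) + d) = 1/4 := OnePoint.coe_eq_coe.mp hfix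
    rw [div_eq_iff hden] at hfr
    have E1 : 4*a + 16*b = c + 4*d := by linarith
    -- decode parabolicity
    rw [Matrix.trace_fin_two, Matrix.det_fin_two, ha, hb, hc, hd] at hpar
    -- solve for b and c
    have hcc : c = 2*(a - d) := by
      have E1c : (4*a + 16*b) * c = (c + 4*d) * c := by rw [E1]
      have h0 : (2*(a-d) - c)^2 = 0 := by nlinarith [E1c, hpar]
      have := sq_eq_zero_iff.mp h0
      linarith
    have hbb : b = -(a - d)/8 := by
      rw [hcc] at E1
      linarith
    by_cases hdel : a - d = 0
    · -- A is scalar, contradicting `pgl A ≠ 1`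
      apply hne1
      have hA : A.val = a • (1 : Mat2) := by
        ext i j
        fin_cases i <;> fin_cases j <;>
          simp [Matrix.smul_apply, Matrix.one_apply, ha, hb, hc, hd]
        · rw [hbb]; linarith
        · rw [hcc]; linarith
        · linarith
      have hcen : A ∈ Subgroup.center (GL (Fin 2) ℚ) := by
        rw [Subgroup.mem_center_iff]
        intro g
        apply Units.ext
        rw [Units.val_mul, Units.val_mul, hA, Matrix.mul_smul, Matrix.smul_mul,
          mul_one, one_mul]
      exact (QuotientGroup.eq_one_iff A).mpr hcen
    -- main case: A = s•1 + δ•K with δ ≠ 0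
    have hAval : A.val = (a - (a-d)/2) • (1 : Mat2) + (a-d) • Kmat := by
      ext i j
      fin_cases i <;> fin_cases j <;>
        simp [Kmat, Matrix.smul_apply, Matrix.one_apply, ha, hb, hc, hd]
      · linarith
      · rw [hbb]; ring
      · rw [hcc]; ring
      · ring
    have hdetA : A.val.det = (a - (a-d)/2)^2 := by
      rw [Matrix.det_fin_two, ha, hb, hc, hd, hbb, hcc]
      ring
    have hs0 : a - (a-d)/2 ≠ 0 := by
      intro h
      apply GL_det_ne A
      rw [hdetA, h]
      norm_num
    -- choose the contraction exponent
    obtain ⟨n, hn⟩ : ∃ n : ℕ, |(a-d) / (a - (a-d)/2)| * (1/1024 : ℚ)^n < 1/100 := by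
      obtain ⟨n, hn⟩ := pow_unbounded_of_one_lt (R := ℚ)
        (100 * |(a-d) / (a - (a-d)/2)|) (by norm_num : (1:ℚ) < 1024)
      refine ⟨n, ?_⟩
      have h1 : (0:ℚ) < 1024^n := by positivity
      have h2 : ((1:ℚ)/1024)^n = 1/1024^n := by rw [div_pow, one_pow]
      rw [h2, mul_one_div, div_lt_div_iff₀ h1 (by norm_num : (0:ℚ) < 100)]
      linarith
    have hqabs : |(a-d) / (a - (a-d)/2) * (1/1024 : ℚ)^n| < 1/100 := by
      rw [abs_mul, abs_of_pos (pow_pos (by norm_num : (0:ℚ) < 1/1024) n)]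
      exact hn
    have hqs : (a-d) * (1/1024 : ℚ)^n
        = ((a-d) / (a - (a-d)/2) * (1/1024 : ℚ)^n) * (a - (a-d)/2) := by
      rw [mul_comm ((a-d) / (a - (a-d)/2)) ((1/1024 : ℚ)^n), mul_assoc,
        div_mul_cancel₀ _ hs0, mul_comm]
    -- the conjugated element
    have hstep : (Hu^n).val * A.val
        = ((a - (a-d)/2) • (1 : Mat2) + ((a-d) * (1/1024 : ℚ)^n) • Kmat) * (Hu^n).val := by
      rw [hAval, Units.val_pow_eq_pow_val]
      calc Hu.val^n * ((a - (a-d)/2) • (1 : Mat2) + (a-d) • Kmat)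
          = (a - (a-d)/2) • Hu.val^n + (a-d) • (Hu.val^n * Kmat) := by
            rw [mul_add, Matrix.mul_smul, Matrix.mul_smul, mul_one]
      _ = (a - (a-d)/2) • Hu.val^n
            + (a-d) • (((1/1024 : ℚ)^n) • (Kmat * Hu.val^n)) := by rw [Hu_pow_mul_K]
      _ = (a - (a-d)/2) • Hu.val^n
            + ((a-d) * (1/1024 : ℚ)^n) • (Kmat * Hu.val^n) := by rw [smul_smul]
      _ = ((a - (a-d)/2) • (1 : Mat2) + ((a-d) * (1/1024 : ℚ)^n) • Kmat) * Hu.val^n := by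
            rw [add_mul, Matrix.smul_mul, Matrix.smul_mul, one_mul]
    have hBval : (Hu^n * A * (Hu^n)⁻¹).val
        = (a - (a-d)/2) • (1 : Mat2) + ((a-d) * (1/1024 : ℚ)^n) • Kmat := by
      calc (Hu^n * A * (Hu^n)⁻¹).val = (Hu^n).val * A.val * ((Hu^n)⁻¹).val := by
            rw [Units.val_mul, Units.val_mul]
      _ = ((a - (a-d)/2) • (1 : Mat2) + ((a-d) * (1/1024 : ℚ)^n) • Kmat)
            * ((Hu^n).val * ((Hu^n)⁻¹).val) := by rw [hstep, mul_assoc]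
      _ = (a - (a-d)/2) • (1 : Mat2) + ((a-d) * (1/1024 : ℚ)^n) • Kmat := by
            rw [Units.mul_inv, mul_one]
    have hεne : (a-d) * (1/1024 : ℚ)^n ≠ 0 := mul_ne_zero hdel (by positivity)
    -- the conjugated element is not the identity in PGL₂
    have hBne1 : pgl (Hu^n * A * (Hu^n)⁻¹) ≠ 1 := by
      intro h
      have hcen := (QuotientGroup.eq_one_iff (Hu^n * A * (Hu^n)⁻¹)).mp h
      have h10 : (Hu^n * A * (Hu^n)⁻¹).val 1 0 = 0 := by
        rw [central_val hcen]
        simp [Matrix.smul_apply, Matrix.one_apply]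
      rw [hBval] at h10
      have h10' : ((a - (a-d)/2) • (1 : Mat2) + ((a-d) * (1/1024 : ℚ)^n) • Kmat) 1 0
          = (a-d) * (1/1024 : ℚ)^n * 2 := by
        simp [Kmat, Matrix.add_apply, Matrix.smul_apply, Matrix.one_apply]
      rw [h10'] at h10
      exact hεne (by linarith)
    -- memberships in Δ(6/11, 6)
    have hU1mem : pgl U1 ∈ Delta (6/11) 3 := by
      apply Subgroup.subset_closure
      refine ⟨U1, Or.inl ?_, rfl⟩
      show V1 = _
      ext i j
      fin_cases i <;> fin_cases j <;> norm_num [V1]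
    have hU2mem : pgl U2 ∈ Delta (6/11) 3 := by
      apply Subgroup.subset_closure
      refine ⟨U2, Or.inr ?_, rfl⟩
      show V2 = _
      ext i j
      fin_cases i <;> fin_cases j <;> norm_num [V2]
    have hHmem : pgl Hu ∈ Delta (6/11) 3 := by
      have hh : pgl Hu
          = (pgl U1)⁻¹ * pgl U2 * pgl U1 * (pgl U2)⁻¹ * (pgl U2)⁻¹ * (pgl U2)⁻¹ := by
        simp [Hu, _root_.map_mul, _root_.map_inv]
      rw [hh]
      exact mul_mem (mul_mem (mul_mem (mul_mem (mul_mem (inv_mem hU1mem) hU2mem) hU1mem)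
        (inv_mem hU2mem)) (inv_mem hU2mem)) (inv_mem hU2mem)
    have hBmem : pgl (Hu^n * A * (Hu^n)⁻¹) ∈ Delta (6/11) 3 := by
      rw [_root_.map_mul, _root_.map_mul, _root_.map_inv, _root_.map_pow]
      exact mul_mem (mul_mem (pow_mem hHmem n) hmem) (inv_mem (pow_mem hHmem n))
    -- Δ(6/11,6) is contained in the image of the free group
    have hle : Delta (6/11) 3 ≤ (pgl.comp ψ).range := by
      apply (Subgroup.closure_le _).mpr
      rintro x ⟨C, hC | hC, rfl⟩
      · have hCU : C = U1 := by
          apply Units.ext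
          rw [hC]
          show _ = V1
          ext i j
          fin_cases i <;> fin_cases j <;> norm_num [V1]
        refine ⟨FreeGroup.of true, ?_⟩
        rw [MonoidHom.comp_apply, show ψ (FreeGroup.of true) = U1 from FreeGroup.lift_apply_of, hCU]
      · have hCU : C = U2 := by
          apply Units.ext
          rw [hC]
          show _ = V2
          ext i j
          fin_cases i <;> fin_cases j <;> norm_num [V2]
        refine ⟨FreeGroup.of false, ?_⟩
        rw [MonoidHom.comp_apply, show ψ (FreeGroup.of false) = U2 from FreeGroup.lift_apply_of, hCU]
    obtain ⟨w, hw⟩ := hle hBmem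
    have hwne : w ≠ 1 := by
      rintro rfl
      rw [_root_.map_one] at hw
      exact hBne1 hw.symm
    -- ψ w differs from the conjugated element by a central (scalar) element
    have hw' : QuotientGroup.mk' (Subgroup.center (GL (Fin 2) ℚ)) (ψ w)
        = QuotientGroup.mk' (Subgroup.center (GL (Fin 2) ℚ)) (Hu^n * A * (Hu^n)⁻¹) := hw
    obtain ⟨Z, hZc, hZe⟩ := (QuotientGroup.mk'_eq_mk' _).mp hw'
    have hZv := central_val hZc
    have hz0 : Z.val 0 0 ≠ 0 := by
      intro h
      apply GL_det_ne Z
      rw [hZv, h]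
      simp
    have hval : Z.val 0 0 • (ψ w).val = (Hu^n * A * (Hu^n)⁻¹).val := by
      have h := congrArg Units.val hZe
      rw [Units.val_mul, hZv, Matrix.mul_smul, mul_one] at h
      exact h
    have hact : act (ψ w).val Complex.I = act (Hu^n * A * (Hu^n)⁻¹).val Complex.I := by
      rw [← hval, act_smul _ hz0]
    obtain ⟨p, hYp⟩ := pingpong w hwne
    rw [hact, hBval, hqs] at hYp
    exact far (a - (a-d)/2) ((a-d) / (a - (a-d)/2) * (1/1024 : ℚ)^n) hs0 hqabs p hYp
  exact ⟨main, fun h => main (h ▸ Set.mem_univ _)⟩
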